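/- The function Z(x,y,t) = (x−2)(−t² + 2t(x+y) + (3x−y)(x+y)) / (8 y t (t−x−y)(t+x−y)(t−3x+y)) at x = 3 has a critical point at y = t = (9/16)(−1+√33), and (2π)³ times its value there equals (59 + 11√33)π³/486. -/

import Mathlib

open Real

lemma clm_eq_zero (L : ℝ × ℝ →L[ℝ] ℝ) (h1 : L (1, 0) = 0) (h2 : L (0, 1) = 0) :
    L = 0 := by
  ext
  · simpa using h1
  · simpa using h2

lemma hasFDerivAt_of_eq {f : ℝ × ℝ → ℝ} {L L' : ℝ × ℝ →L[ℝ] ℝ} {x : ℝ × ℝ}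
    (h : HasFDerivAt f L x) (h2 : L = L') : HasFDerivAt f L' x := h2 ▸ h

set_option maxHeartbeats 2000000 in
/-- The Martelli–Sparks–Yau Z-function for del Pezzo 2,
`Z(x,y,t) = (x-2)(-t² + 2t(x+y) + (3x-y)(x+y)) / (8yt(t-x-y)(t+x-y)(t-3x+y))`, restricted
to `x = 3`, has a critical point at `y = t = (9/16)(-1+√33)`, and `(2π)³` times its value
there equals `(59 + 11√33)π³/486`. -/
theorem dP2_volume_minimization
    (Z : ℝ → ℝ → ℝ → ℝ)
    (hZ : Z = fun x y t =>
      (x - 2) * (-t ^ 2 + 2 * t * (x + y) + (3 * x - y) * (x + y)) /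
        (8 * y * t * (t - x - y) * (t + x - y) * (t - 3 * x + y)))
    (c : ℝ) (hc : c = (9 / 16) * (-1 + sqrt 33)) :
    fderiv ℝ (fun p : ℝ × ℝ => Z 3 p.1 p.2) (c, c) = 0 ∧
      (2 * π) ^ 3 * Z 3 c c = (59 + 11 * sqrt 33) * π ^ 3 / 486 := by
  have h33 : Real.sqrt 33 ^ 2 = 33 := Real.sq_sqrt (by norm_num)
  have h33lb : (5 : ℝ) < Real.sqrt 33 := by
    nlinarith [Real.sqrt_nonneg 33]
  have hs : Real.sqrt 33 = (16 * c + 9) / 9 := by rw [hc]; ring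
  have hc2 : 8 * c ^ 2 + 9 * c - 81 = 0 := by
    rw [hc]; nlinarith [h33]
  have hcpos : 0 < c := by rw [hc]; nlinarith
  have hc9 : 2 * c - 9 ≠ 0 := by
    intro h
    have : c = 9 / 2 := by linarith
    rw [this] at hc2; norm_num at hc2
  have hden : 8 * c * c * (c - 3 - c) * (c + 3 - c) * (c - 3 * 3 + c) ≠ 0 := by
    have h : 8 * c * c * (c - 3 - c) * (c + 3 - c) * (c - 3 * 3 + c)
        = -72 * (c * c) * (2 * c - 9) := by ring
    rw [h]
    intro h'
    rcases mul_eq_zero.1 h' with h'' | h''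
    · rcases mul_eq_zero.1 h'' with h3 | h3
      · norm_num at h3
      · nlinarith
    · exact hc9 h''
  have h45 : c < 9 / 2 := by nlinarith
  have hc9' : c - 9 + c ≠ 0 := fun h => hc9 (by linarith)
  have hA : c ^ 2 * 648 - c ^ 3 * 144 ≠ 0 :=
    (by nlinarith : (0:ℝ) < c ^ 2 * 648 - c ^ 3 * 144).ne'
  have hB : c ^ 4 * 419904 - c ^ 5 * 186624 + c ^ 6 * 20736 ≠ 0 := by
    have h : c ^ 4 * 419904 - c ^ 5 * 186624 + c ^ 6 * 20736
        = (c ^ 2 * 648 - c ^ 3 * 144) ^ 2 := by ring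
    rw [h]; exact pow_ne_zero 2 hA
  constructor
  · have h1 : HasFDerivAt (fun p : ℝ × ℝ => p.1) (ContinuousLinearMap.fst ℝ ℝ ℝ) (c, c) :=
      hasFDerivAt_fst
    have h2 : HasFDerivAt (fun p : ℝ × ℝ => p.2) (ContinuousLinearMap.snd ℝ ℝ ℝ) (c, c) :=
      hasFDerivAt_snd
    have hnum := ((((h2.mul h2).neg).add ((h2.const_mul 2).mul (h1.const_add 3))).add
      ((h1.const_sub (3 * 3)).mul (h1.const_add 3))).const_mul (3 - 2)
    have hd := ((((h1.const_mul 8).mul h2).mul ((h2.sub_const 3).sub h1)).mul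
      ((h2.add_const 3).sub h1)).mul ((h2.sub_const (3 * 3)).add h1)
    have H := hnum.mul ((hasFDerivAt_inv' hden).comp ((c,c) : ℝ × ℝ) hd)
    have key : HasFDerivAt (fun p : ℝ × ℝ => Z 3 p.1 p.2) (0 : ℝ × ℝ →L[ℝ] ℝ) (c, c) := by
      have heq : (fun p : ℝ × ℝ => Z 3 p.1 p.2) = fun p : ℝ × ℝ =>
          ((3 - 2) * (-(p.2 * p.2) + 2 * p.2 * (3 + p.1) + (3 * 3 - p.1) * (3 + p.1))) *
            (8 * p.1 * p.2 * (p.2 - 3 - p.1) * (p.2 + 3 - p.1) * (p.2 - 3 * 3 + p.1))⁻¹ := by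
        funext p; rw [hZ]; ring
      rw [heq]
      refine hasFDerivAt_of_eq H ?_
      apply clm_eq_zero
      · simp only [ContinuousLinearMap.add_apply, ContinuousLinearMap.sub_apply,
          ContinuousLinearMap.smul_apply, ContinuousLinearMap.neg_apply,
          ContinuousLinearMap.comp_apply, Function.comp_apply,
          ContinuousLinearMap.coe_fst', ContinuousLinearMap.coe_snd',
          ContinuousLinearMap.mulLeftRight_apply, ContinuousLinearMap.zero_apply,
          smul_eq_mul]
        norm_num
        field_simp [hcpos.ne', hc9']
        linear_combination 9 * hc2
      · simp only [ContinuousLinearMap.add_apply, ContinuousLinearMap.sub_apply,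
          ContinuousLinearMap.smul_apply, ContinuousLinearMap.neg_apply,
          ContinuousLinearMap.comp_apply, Function.comp_apply,
          ContinuousLinearMap.coe_fst', ContinuousLinearMap.coe_snd',
          ContinuousLinearMap.mulLeftRight_apply, ContinuousLinearMap.zero_apply,
          smul_eq_mul]
        norm_num
        field_simp [hcpos.ne', hc9']
        linear_combination 9 * hc2
    exact key.fderiv
  · rw [hZ, hs]
    field_simp
    rw [div_eq_iff (by norm_num; exact hc9')]
    linear_combination (3168 * c ^ 2 - 6480 * c - 11664) * hc2
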